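/- U(V,Q) = U_L(V,Q) ∩ U_R(V,Q): an element g of Cl(V,Q) satisfies g·c(g) = c(g)·g = 1 if and only if both left multiplication L(g) and right multiplication R(g) preserve the canonical bilinear form Q̄. -/

import Mathlib

open CliffordAlgebra

section Defs

variable {F V : Type*} [Field F] [AddCommGroup V] [Module F V]

/-- The monomial `e_I` associated to a multi-index `I`, realized as a finite set of
indices multiplied in increasing order (with `e_∅ = 1`). -/
noncomputable def eI (Qf : QuadraticForm F V) {n : ℕ} (b : Module.Basis (Fin n) F V)
    (s : Finset (Fin n)) : CliffordAlgebra Qf :=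
  ((s.sort (· ≤ ·)).map fun i => ι Qf (b i)).prod

/-- The conjugation anti-automorphism `c = α ∘ τ` of the Clifford algebra. -/
noncomputable def cconj (Qf : QuadraticForm F V) :
    CliffordAlgebra Qf →ₗ[F] CliffordAlgebra Qf :=
  involute.toLinearMap ∘ₗ (reverse (Q := Qf))

/-- The canonical bilinear form `Q̄(x,y) = p(x · c(y))`, where `p` is the scalar-component
projection determined by a monomial basis `bas` (indexed by multi-indices, with
`bas s = e_s`, in particular `bas ∅ = 1`). -/
noncomputable def Qbar {Qf : QuadraticForm F V} {n : ℕ}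
    (bas : Module.Basis (Finset (Fin n)) F (CliffordAlgebra Qf))
    (x y : CliffordAlgebra Qf) : F :=
  bas.coord ∅ (x * cconj Qf y)

/-- The Lie algebra `G = {ξ : c(ξ) = -ξ}` of infinitesimal isometries, as a submodule. -/
noncomputable def Gsub (Qf : QuadraticForm F V) : Submodule F (CliffordAlgebra Qf) :=
  LinearMap.ker (cconj Qf + LinearMap.id)

end Defs

section Aux
variable {F V : Type*} [Field F] [AddCommGroup V] [Module F V]
variable {Qf : QuadraticForm F V} {n : ℕ} {b : Module.Basis (Fin n) F V}
variable {B : LinearMap.BilinForm F V}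

lemma cconj_mul (x y : CliffordAlgebra Qf) :
    cconj Qf (x * y) = cconj Qf y * cconj Qf x := by
  simp [cconj, reverse.map_mul, map_mul]

lemma cconj_cconj (x : CliffordAlgebra Qf) : cconj Qf (cconj Qf x) = x := by
  simp only [cconj, LinearMap.comp_apply, AlgHom.toLinearMap_apply, reverse_involute,
    involute_involute, reverse_reverse]

lemma cconj_one : cconj Qf (1 : CliffordAlgebra Qf) = 1 := by
  simp [cconj]

lemma eI_empty : eI Qf b ∅ = 1 := by simp [eI]

lemma eI_singleton (i : Fin n) : eI Qf b {i} = ι Qf (b i) := by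
  simp [eI, Finset.sort_singleton]

lemma eI_insert {j : Fin n} {u : Finset (Fin n)} (h : ∀ k ∈ u, j < k) :
    eI Qf b (insert j u) = ι Qf (b j) * eI Qf b u := by
  have hj : j ∉ u := fun hm => lt_irrefl j (h j hm)
  rw [eI, Finset.sort_insert _ (fun k hk => (h k hk).le) hj, List.map_cons, List.prod_cons]
  rfl

lemma sd_insert {i : Fin n} {t : Finset (Fin n)} (h : i ∉ t) :
    symmDiff {i} t = insert i t := by
  ext k
  simp only [Finset.mem_symmDiff, Finset.mem_singleton, Finset.mem_insert]
  constructor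
  · rintro (⟨rfl, -⟩ | ⟨hk, -⟩) <;> tauto
  · rintro (rfl | hk)
    · exact Or.inl ⟨rfl, h⟩
    · by_cases hik : k = i
      · subst hik; exact absurd hk h
      · exact Or.inr ⟨hk, fun h' => hik h'⟩

lemma sd_erase {j : Fin n} {t : Finset (Fin n)} (h : j ∈ t) :
    symmDiff {j} t = t.erase j := by
  ext k
  simp only [Finset.mem_symmDiff, Finset.mem_singleton, Finset.mem_erase]
  constructor
  · rintro (⟨rfl, hk⟩ | ⟨hk, hne⟩)
    · exact absurd h hk
    · exact ⟨hne, hk⟩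
  · rintro ⟨hne, hk⟩; exact Or.inr ⟨hk, hne⟩


lemma anticomm (hortho : ∀ i j : Fin n, i ≠ j → B (b i) (b j) = 0)
    (hQ : ∀ v : V, Qf v = -(B v v)) {i j : Fin n} (hij : i ≠ j) :
    ι Qf (b i) * ι Qf (b j) = -(ι Qf (b j) * ι Qf (b i)) := by
  have h := ι_mul_ι_add_swap (Q := Qf) (b i) (b j)
  have hp : QuadraticMap.polar Qf (b i) (b j) = 0 := by
    simp only [QuadraticMap.polar, hQ, map_add, LinearMap.add_apply,
      hortho i j hij, hortho j i hij.symm]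
    ring
  rw [hp, map_zero] at h
  exact eq_neg_of_add_eq_zero_left h

lemma step1 (hortho : ∀ i j : Fin n, i ≠ j → B (b i) (b j) = 0)
    (hQ : ∀ v : V, Qf v = -(B v v)) (hQne : ∀ i : Fin n, Qf (b i) ≠ 0) :
    ∀ t : Finset (Fin n), ∀ i : Fin n, ∃ μ : F, μ ≠ 0 ∧
      ι Qf (b i) * eI Qf b t = μ • eI Qf b (symmDiff {i} t) := by
  intro t
  induction t using Finset.strongInduction with
  | _ t ih =>
    intro i
    rcases t.eq_empty_or_nonempty with rfl | ht
    · refine ⟨1, one_ne_zero, ?_⟩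
      rw [one_smul, sd_insert (Finset.notMem_empty i), eI_empty, mul_one,
        Finset.insert_empty, eI_singleton]
    · set j := t.min' ht with hj
      have hjt : j ∈ t := t.min'_mem ht
      set t' := t.erase j with ht'
      have hlt : ∀ k ∈ t', j < k := fun k hk =>
        lt_of_le_of_ne (t.min'_le _ (Finset.mem_of_mem_erase hk))
          (Ne.symm (Finset.ne_of_mem_erase hk))
      have hsplit : eI Qf b t = ι Qf (b j) * eI Qf b t' := by
        rw [← eI_insert hlt, Finset.insert_erase hjt]
      rcases lt_trichotomy i j with h | h | h
      · have hit : i ∉ t := fun hm => absurd (t.min'_le _ hm) (not_le.2 h)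
        have hall : ∀ k ∈ t, i < k := fun k hk => lt_of_lt_of_le h (t.min'_le _ hk)
        refine ⟨1, one_ne_zero, ?_⟩
        rw [one_smul, sd_insert hit, eI_insert hall]
      · refine ⟨Qf (b j), hQne j, ?_⟩
        rw [h, hsplit, ← mul_assoc, ι_sq_scalar, sd_erase hjt, ← ht',
          Algebra.smul_def]
      · obtain ⟨μ, hμ, hmul⟩ := ih t' (Finset.erase_ssubset hjt) i
        have hij : i ≠ j := h.ne'
        have hji : j ∉ symmDiff {i} t' := by
          simp only [Finset.mem_symmDiff, Finset.mem_singleton, ht', Finset.mem_erase]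
          rintro (⟨rfl, -⟩ | ⟨⟨hne, -⟩, -⟩)
          · exact lt_irrefl _ h
          · exact hne rfl
        have hjlt : ∀ k ∈ symmDiff {i} t', j < k := by
          intro k hk
          rcases Finset.mem_symmDiff.1 hk with ⟨hk1, -⟩ | ⟨hk1, -⟩
          · rcases Finset.mem_singleton.1 hk1 with rfl; exact h
          · exact hlt k hk1
        have hset : insert j (symmDiff {i} t') = symmDiff {i} t := by
          ext k
          by_cases hk : k = j <;>
            simp only [Finset.mem_insert, Finset.mem_symmDiff, Finset.mem_singleton,
              ht', Finset.mem_erase, hk] <;> tauto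
        refine ⟨-μ, neg_ne_zero.2 hμ, ?_⟩
        rw [hsplit, ← mul_assoc, anticomm hortho hQ hij, neg_mul, mul_assoc, hmul,
          mul_smul_comm, ← eI_insert hjlt, hset, neg_smul]

lemma listProd (hortho : ∀ i j : Fin n, i ≠ j → B (b i) (b j) = 0)
    (hQ : ∀ v : V, Qf v = -(B v v)) (hQne : ∀ i : Fin n, Qf (b i) ≠ 0) :
    ∀ L : List (Fin n), ∃ μ : F, μ ≠ 0 ∧
      (L.map fun i => ι Qf (b i)).prod =
        μ • eI Qf b (L.foldr (fun i s => symmDiff {i} s) ∅) := by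
  intro L
  induction L with
  | nil => exact ⟨1, one_ne_zero, by simp [eI_empty]⟩
  | cons i L ihL =>
    obtain ⟨μ, hμ, hm⟩ := ihL
    obtain ⟨ν, hν, hn⟩ := step1 hortho hQ hQne (L.foldr (fun i s => symmDiff {i} s) ∅) i
    refine ⟨μ * ν, mul_ne_zero hμ hν, ?_⟩
    rw [List.map_cons, List.prod_cons, hm, mul_smul_comm, hn, List.foldr_cons, smul_smul]

lemma foldr_from (L : List (Fin n)) (s : Finset (Fin n)) :
    L.foldr (fun i u => symmDiff {i} u) s =
      symmDiff (L.foldr (fun i u => symmDiff {i} u) ∅) s := by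
  induction L with
  | nil => simp [symmDiff_eq_right.2]
  | cons i L ihL => simp [List.foldr_cons, ihL, symmDiff_assoc]

lemma foldr_nodup (L : List (Fin n)) (h : L.Nodup) :
    L.foldr (fun i u => symmDiff {i} u) ∅ = L.toFinset := by
  induction L with
  | nil => simp
  | cons i L ihL =>
    rcases List.nodup_cons.1 h with ⟨hi, hnd⟩
    rw [List.foldr_cons, ihL hnd, List.toFinset_cons,
      sd_insert (by simpa using hi)]

lemma master (hortho : ∀ i j : Fin n, i ≠ j → B (b i) (b j) = 0)
    (hQ : ∀ v : V, Qf v = -(B v v)) (hQne : ∀ i : Fin n, Qf (b i) ≠ 0)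
    (s t : Finset (Fin n)) : ∃ μ : F, μ ≠ 0 ∧
      eI Qf b s * eI Qf b t = μ • eI Qf b (symmDiff s t) := by
  obtain ⟨μ, hμ, hm⟩ := listProd hortho hQ hQne (s.sort (· ≤ ·) ++ t.sort (· ≤ ·))
  refine ⟨μ, hμ, ?_⟩
  have h1 : eI Qf b s * eI Qf b t =
      ((s.sort (· ≤ ·) ++ t.sort (· ≤ ·)).map fun i => ι Qf (b i)).prod := by
    rw [List.map_append, List.prod_append]; rfl
  have h2 : (s.sort (· ≤ ·) ++ t.sort (· ≤ ·)).foldr (fun i u => symmDiff {i} u) ∅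
      = symmDiff s t := by
    rw [List.foldr_append, foldr_from,
      foldr_nodup _ (s.sort_nodup _), foldr_nodup _ (t.sort_nodup _)]
    simp [Finset.sort_toFinset]
  rw [h1, hm, h2]


lemma hQne_of (hnd : ∀ v : V, (∀ w : V, B v w = 0) → v = 0)
    (hortho : ∀ i j : Fin n, i ≠ j → B (b i) (b j) = 0)
    (hQ : ∀ v : V, Qf v = -(B v v)) : ∀ i : Fin n, Qf (b i) ≠ 0 := by
  intro i h0
  have hB : B (b i) (b i) = 0 := by
    have h := hQ (b i); rw [h0] at h; exact neg_eq_zero.1 h.symm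
  have hz : B (b i) = 0 := by
    apply b.ext; intro j
    by_cases hji : j = i
    · subst hji; exact hB
    · exact hortho i j (fun h' => hji h'.symm)
  exact b.ne_zero i (hnd (b i) fun w => by rw [hz]; rfl)

lemma coord_eI (bas : Module.Basis (Finset (Fin n)) F (CliffordAlgebra Qf))
    (hbas : ∀ s : Finset (Fin n), bas s = eI Qf b s) (u s : Finset (Fin n)) :
    bas.coord u (eI Qf b s) = if s = u then 1 else 0 := by
  rw [← hbas, Module.Basis.coord_apply, Module.Basis.repr_self, Finsupp.single_apply]

lemma sd_ne_empty {s t : Finset (Fin n)} (h : s ≠ t) : symmDiff s t ≠ ∅ := by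
  intro h0
  exact h (symmDiff_eq_bot.1 (by simpa using h0))

lemma trace (hortho : ∀ i j : Fin n, i ≠ j → B (b i) (b j) = 0)
    (hQ : ∀ v : V, Qf v = -(B v v)) (hQne : ∀ i : Fin n, Qf (b i) ≠ 0)
    (bas : Module.Basis (Finset (Fin n)) F (CliffordAlgebra Qf))
    (hbas : ∀ s : Finset (Fin n), bas s = eI Qf b s)
    (x y : CliffordAlgebra Qf) :
    bas.coord ∅ (x * y) = bas.coord ∅ (y * x) := by
  have key : ((LinearMap.mul F (CliffordAlgebra Qf)).compr₂ (bas.coord ∅)) =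
      ((LinearMap.mul F (CliffordAlgebra Qf)).flip.compr₂ (bas.coord ∅)) := by
    apply bas.ext; intro s; apply bas.ext; intro t
    simp only [LinearMap.compr₂_apply, LinearMap.mul_apply', LinearMap.flip_apply]
    by_cases hst : s = t
    · subst hst; rfl
    · obtain ⟨μ, hμ, hm⟩ := master hortho hQ hQne s t
      obtain ⟨ν, hν, hn⟩ := master hortho hQ hQne t s
      rw [hbas, hbas, hm, hn, map_smul, map_smul, coord_eI bas hbas,
        coord_eI bas hbas, if_neg (sd_ne_empty hst), if_neg (sd_ne_empty (Ne.symm hst))]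
      simp
  have h := DFunLike.congr_fun (DFunLike.congr_fun key x) y
  simpa using h

lemma nondeg (hortho : ∀ i j : Fin n, i ≠ j → B (b i) (b j) = 0)
    (hQ : ∀ v : V, Qf v = -(B v v)) (hQne : ∀ i : Fin n, Qf (b i) ≠ 0)
    (bas : Module.Basis (Finset (Fin n)) F (CliffordAlgebra Qf))
    (hbas : ∀ s : Finset (Fin n), bas s = eI Qf b s)
    (v : CliffordAlgebra Qf) (hv : ∀ s, bas.coord ∅ (eI Qf b s * v) = 0) :
    v = 0 := by
  have hz : ∀ s, bas.coord s v = 0 := by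
    intro s
    obtain ⟨μ, hμ, hm⟩ := master hortho hQ hQne s s
    have key : (bas.coord ∅).comp (LinearMap.mulLeft F (eI Qf b s)) = μ • bas.coord s := by
      apply bas.ext; intro t
      simp only [LinearMap.comp_apply, LinearMap.mulLeft_apply, LinearMap.smul_apply,
        smul_eq_mul]
      by_cases hts : t = s
      · subst hts
        rw [hbas, hm, map_smul, coord_eI bas hbas, coord_eI bas hbas, symmDiff_self]
        simp
      · obtain ⟨ν, hν, hn⟩ := master hortho hQ hQne s t
        rw [hbas, hn, map_smul, coord_eI bas hbas, coord_eI bas hbas,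
          if_neg (sd_ne_empty fun h' => hts h'.symm), if_neg hts]
        simp
    have h2 := DFunLike.congr_fun key v
    simp only [LinearMap.comp_apply, LinearMap.mulLeft_apply, LinearMap.smul_apply,
      smul_eq_mul] at h2
    rw [hv s] at h2
    exact (mul_eq_zero.1 h2.symm).resolve_left hμ
  exact bas.forall_coord_eq_zero_iff.1 hz

lemma to_one (hortho : ∀ i j : Fin n, i ≠ j → B (b i) (b j) = 0)
    (hQ : ∀ v : V, Qf v = -(B v v)) (hQne : ∀ i : Fin n, Qf (b i) ≠ 0)
    (bas : Module.Basis (Finset (Fin n)) F (CliffordAlgebra Qf))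
    (hbas : ∀ s : Finset (Fin n), bas s = eI Qf b s)
    (a : CliffordAlgebra Qf)
    (h : ∀ x : CliffordAlgebra Qf, bas.coord ∅ (x * a) = bas.coord ∅ x) : a = 1 := by
  have h1 : ∀ s, bas.coord ∅ (eI Qf b s * (a - 1)) = 0 := by
    intro s; rw [mul_sub, map_sub, mul_one, h, sub_self]
  exact sub_eq_zero.1 (nondeg hortho hQ hQne bas hbas (a - 1) h1)

end Aux

theorem stmt14 {F V : Type*} [Field F] [AddCommGroup V] [Module F V]
    [FiniteDimensional F V] (h2 : (2 : F) ≠ 0)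
    (B : LinearMap.BilinForm F V)
    (hsymm : ∀ v w : V, B v w = B w v)
    (hnd : ∀ v : V, (∀ w : V, B v w = 0) → v = 0)
    (Qf : QuadraticForm F V) (hQ : ∀ v : V, Qf v = -(B v v))
    {n : ℕ} (b : Module.Basis (Fin n) F V)
    (hortho : ∀ i j : Fin n, i ≠ j → B (b i) (b j) = 0)
    (bas : Module.Basis (Finset (Fin n)) F (CliffordAlgebra Qf))
    (hbas : ∀ s : Finset (Fin n), bas s = eI Qf b s) :
    ∀ g : CliffordAlgebra Qf,
      (g * cconj Qf g = 1 ∧ cconj Qf g * g = 1) ↔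
        ((∀ x y : CliffordAlgebra Qf, Qbar bas (g * x) (g * y) = Qbar bas x y) ∧
         (∀ x y : CliffordAlgebra Qf, Qbar bas (x * g) (y * g) = Qbar bas x y)) := by
  have hQne : ∀ i : Fin n, Qf (b i) ≠ 0 := hQne_of hnd hortho hQ
  intro g
  constructor
  · rintro ⟨hg1, hg2⟩
    constructor
    · intro x y
      show bas.coord ∅ (g * x * cconj Qf (g * y)) = bas.coord ∅ (x * cconj Qf y)
      rw [cconj_mul]
      rw [show g * x * (cconj Qf y * cconj Qf g)
          = g * (x * (cconj Qf y * cconj Qf g)) from by rw [mul_assoc]]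
      rw [trace hortho hQ hQne bas hbas g (x * (cconj Qf y * cconj Qf g))]
      rw [show x * (cconj Qf y * cconj Qf g) * g
          = x * (cconj Qf y * (cconj Qf g * g)) from by simp [mul_assoc]]
      rw [hg2, mul_one]
    · intro x y
      show bas.coord ∅ (x * g * cconj Qf (y * g)) = bas.coord ∅ (x * cconj Qf y)
      rw [cconj_mul]
      rw [show x * g * (cconj Qf g * cconj Qf y)
          = x * (g * cconj Qf g * cconj Qf y) from by simp [mul_assoc]]
      rw [hg1, one_mul]
  · rintro ⟨HL, HR⟩
    constructor
    · apply to_one hortho hQ hQne bas hbas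
      intro x
      have h := HR x 1
      simp only [Qbar, one_mul, cconj_one, mul_one] at h
      rw [← mul_assoc]
      exact h
    · apply to_one hortho hQ hQne bas hbas
      intro x
      have h := HL x 1
      simp only [Qbar, mul_one, cconj_one] at h
      calc bas.coord ∅ (x * (cconj Qf g * g))
          = bas.coord ∅ (x * cconj Qf g * g) := by rw [mul_assoc]
        _ = bas.coord ∅ (g * (x * cconj Qf g)) :=
            (trace hortho hQ hQne bas hbas g (x * cconj Qf g)).symm
        _ = bas.coord ∅ (g * x * cconj Qf g) := by rw [mul_assoc]
        _ = bas.coord ∅ x := h
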